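/- Let p be a prime and m a positive natural number. Then the p-adic valuation of the multinomial coefficient (p·m)! / (m!)^p equals the sum of the base-p digits of m. In particular, p divides (p·m)! / (m!)^p, so in a divided power algebra over a field of characteristic p one has γ_m(x)^p = 0 for all m ≥ 1. -/

import Mathlib

open Nat Finset

/-- For a prime `p` and `m ≥ 1`, the `p`-adic valuation of the multinomial coefficient
`(p·m)! / (m!)^p` equals the sum of the base-`p` digits of `m`; in particular `p` divides
`(p·m)! / (m!)^p`. -/
theorem stmt_6 (p : ℕ) (hp : p.Prime) (m : ℕ) (hm : 1 ≤ m) :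
    padicValNat p ((p * m).factorial / m.factorial ^ p) = (Nat.digits p m).sum ∧
      p ∣ (p * m).factorial / m.factorial ^ p := by
  haveI : Fact p.Prime := ⟨hp⟩
  have hp2 : 2 ≤ p := hp.two_le
  have hm0 : m ≠ 0 := by omega
  -- divisibility of factorials
  have hdvd : m.factorial ^ p ∣ (p * m).factorial := by
    have := Nat.prod_factorial_dvd_factorial_sum (Finset.range p) (fun _ => m)
    simpa [Finset.prod_const, Finset.sum_const, mul_comm] using this
  -- v((pm)!) = m + v(m!)
  have hlog : Nat.log p (p * m) < Nat.log p m + 2 := by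
    rw [mul_comm, Nat.log_mul_base hp.one_lt hm0]; omega
  have hA : padicValNat p (p * m).factorial = m + padicValNat p m.factorial := by
    rw [padicValNat_factorial hlog, padicValNat_factorial (lt_add_of_pos_right _ one_pos : Nat.log p m < Nat.log p m + 1)]
    have key : ∀ i ∈ Finset.Ico 1 (Nat.log p m + 2), p * m / p ^ i = m / p ^ (i - 1) := by
      intro i hi
      simp only [Finset.mem_Ico] at hi
      obtain ⟨j, rfl⟩ : ∃ j, i = j + 1 := ⟨i - 1, by omega⟩
      rw [pow_succ, mul_comm (p ^ j) p, ← Nat.div_div_eq_div_mul, Nat.mul_div_cancel_left _ (by omega)]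
      simp
    rw [Finset.sum_congr rfl key]
    have : ∑ i ∈ Finset.Ico 1 (Nat.log p m + 2), m / p ^ (i - 1)
        = ∑ j ∈ Finset.Ico 0 (Nat.log p m + 1), m / p ^ j := by
      apply Finset.sum_nbij' (fun i => i - 1) (fun j => j + 1) <;> intros <;>
        simp_all [Finset.mem_Ico] <;> omega
    rw [this, Finset.sum_eq_sum_Ico_succ_bot (by omega)]
    simp
  -- Legendre
  have hLeg : (p - 1) * padicValNat p m.factorial = m - (Nat.digits p m).sum :=
    sub_one_mul_padicValNat_factorial m
  have hsle : (Nat.digits p m).sum ≤ m := Nat.digit_sum_le p m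
  have hval : padicValNat p ((p * m).factorial / m.factorial ^ p) = (Nat.digits p m).sum := by
    rw [padicValNat.div_of_dvd hdvd, padicValNat.pow _ _, hA]
    rw [Nat.sub_one_mul] at hLeg
    have hB : padicValNat p m.factorial ≤ p * padicValNat p m.factorial :=
      Nat.le_mul_of_pos_left _ (by omega)
    generalize p * padicValNat p m.factorial = q at *
    omega
  refine ⟨hval, ?_⟩
  apply dvd_of_one_le_padicValNat
  rw [hval]
  have hne : Nat.digits p m ≠ [] := Nat.digits_ne_nil_iff_ne_zero.mpr hm0
  have hlast := Nat.getLast_digit_ne_zero p hm0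
  have hmem := List.getLast_mem hne
  calc 1 ≤ (Nat.digits p m).getLast hne := by omega
    _ ≤ (Nat.digits p m).sum := List.single_le_sum (fun _ _ => Nat.zero_le _) _ hmem
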